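/- Let R be the MU_*-algebra with generators u, d_{l,j}^{(i)}, η_i, q_j (for l,j ≥ 0, i ∈ (ℤ/p)^×) subject to the relations: d_{l,j}^{(i)} − t_{l,j}^{(i)} = u·d_{l,j+1}^{(i)}; d_{0,j}^{(1)} = 0 for all j ≥ 0; q_j − c_j = u·q_{j+1}; q₀ = 0; η₁ = 1; η_i(u·d_{0,0}^{(i)} + i⁻¹) = 1 + k_i·q₁; η_i·q₁ = i·q₁. Then in R, ⋃_{k≥0} Ann(u^k) = Ann(u) = (q₁), i.e. u has bounded u-torsion with annihilator the ideal generated by q₁. -/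

import Mathlib

open MvPolynomial

/-- Generators of the presented `MU_*`-algebra model `R` of `MU^{C_p}_*`:
`u`, `d_{l,j}^{(i)}` (written `d i l j`), `η_i`, `q_j`. -/
inductive Gen : Type
  | u : Gen
  | d : ℕ → ℕ → ℕ → Gen
  | eta : ℕ → Gen
  | q : ℕ → Gen

/-- The defining relations of `R` (Theorem 3.1): for `1 ≤ i ≤ p-1` and `l, j ≥ 0`,
`d_{l,j}^{(i)} − t_{l,j}^{(i)} = u·d_{l,j+1}^{(i)}`;  `d_{0,j}^{(1)} = 0`;
`q_j − c_j = u·q_{j+1}`;  `q₀ = 0`;  `η₁ = 1`;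
`η_i(u·d_{0,0}^{(i)} + i⁻¹) = 1 + k_i·q₁`;  `η_i·q₁ = i·q₁`. -/
def rels (MU : Type) [CommRing MU] (p : ℕ) (t : ℕ → ℕ → ℕ → MU) (c : ℕ → MU)
    (inv kk : ℕ → ℕ) : Set (MvPolynomial Gen MU) :=
  {r | (∃ i l j, 1 ≤ i ∧ i ≤ p - 1 ∧
          r = X (Gen.d i l j) - C (t i l j) - X Gen.u * X (Gen.d i l (j + 1))) ∨
       (∃ j, r = X (Gen.d 1 0 j)) ∨
       (∃ j, r = X (Gen.q j) - C (c j) - X Gen.u * X (Gen.q (j + 1))) ∨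
       r = X (Gen.q 0) ∨
       r = X (Gen.eta 1) - 1 ∨
       (∃ i, 1 ≤ i ∧ i ≤ p - 1 ∧
          r = X (Gen.eta i) * (X Gen.u * X (Gen.d i 0 0) + C ((inv i : MU)))
              - 1 - C ((kk i : MU)) * X (Gen.q 1)) ∨
       (∃ i, 1 ≤ i ∧ i ≤ p - 1 ∧
          r = X (Gen.eta i) * X (Gen.q 1) - C ((i : MU)) * X (Gen.q 1))}

/-- The presented `MU_*`-algebra `R ≅ MU^{C_p}_*`. -/
abbrev Rring (MU : Type) [CommRing MU] (p : ℕ) (t : ℕ → ℕ → ℕ → MU) (c : ℕ → MU)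
    (inv kk : ℕ → ℕ) : Type :=
  MvPolynomial Gen MU ⧸ Ideal.span (rels MU p t c inv kk)

variable {MU : Type} [CommRing MU]

/-- The image of a generator in `R`. -/
noncomputable def gen (MU : Type) [CommRing MU] (p : ℕ) (t : ℕ → ℕ → ℕ → MU)
    (c : ℕ → MU) (inv kk : ℕ → ℕ) (g : Gen) : Rring MU p t c inv kk :=
  Ideal.Quotient.mk (Ideal.span (rels MU p t c inv kk)) (X g)

set_option maxHeartbeats 1000000
set_option synthInstance.maxHeartbeats 400000

namespace Stmt7

variable {MU : Type} [CommRing MU]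

/-- telescope for the `q`-generators: `TelQ c k j` is the expansion of `q_j`
in terms of `q_{j+k}`. -/
noncomputable def TelQ (c : ℕ → MU) : ℕ → ℕ → MvPolynomial Gen MU
  | 0, j => X (Gen.q j)
  | k+1, j => C (c j) + X Gen.u * TelQ c k (j+1)

/-- telescope for the `d`-generators. -/
noncomputable def TelD (t : ℕ → ℕ → ℕ → MU) (i l : ℕ) : ℕ → ℕ → MvPolynomial Gen MU
  | 0, j => X (Gen.d i l j)
  | k+1, j => C (t i l j) + X Gen.u * TelD t i l k (j+1)

/-- the level-`m` reduction substitution. -/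
noncomputable def subm (p : ℕ) (t : ℕ → ℕ → ℕ → MU) (c : ℕ → MU) (m : ℕ) :
    Gen → MvPolynomial Gen MU
  | Gen.u => X Gen.u
  | Gen.eta i => if i = 1 then 1 else X (Gen.eta i)
  | Gen.q j => if j ≤ m then TelQ c (m + 1 - j) j else X (Gen.q j)
  | Gen.d i l j =>
    if i = 1 ∧ l = 0 then 0
    else if 1 ≤ i ∧ i ≤ p - 1 ∧ j ≤ m then TelD t i l (m - j) j
    else X (Gen.d i l j)

lemma aeval_sub_mem (I : Ideal (MvPolynomial Gen MU)) (σ : Gen → MvPolynomial Gen MU)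
    (h : ∀ g, σ g - X g ∈ I) (f : MvPolynomial Gen MU) : aeval σ f - f ∈ I := by
  induction f using MvPolynomial.induction_on with
  | C a => simpa using I.zero_mem
  | add f g hf hg =>
      have h1 : aeval σ (f + g) - (f + g) = (aeval σ f - f) + (aeval σ g - g) := by
        rw [map_add]; ring
      rw [h1]; exact I.add_mem hf hg
  | mul_X f s hf =>
      have h1 : aeval σ (f * X s) - f * X s
          = aeval σ f * (σ s - X s) + (aeval σ f - f) * X s := by
        rw [map_mul, aeval_X]; ring
      rw [h1]; exact I.add_mem (I.mul_mem_left _ (h s)) (I.mul_mem_right _ hf)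

lemma X_mul_cancel (s : Gen) (w : MvPolynomial Gen MU) (h : X s * w = 0) : w = 0 := by
  ext n
  have := MvPolynomial.coeff_mul_X n s w
  rw [mul_comm] at h
  rw [h] at this
  simpa using this.symm

section params

variable (p : ℕ) (t : ℕ → ℕ → ℕ → MU) (c : ℕ → MU) (inv kk : ℕ → ℕ) (m : ℕ)

lemma telq_sub_mem (k j : ℕ) :
    TelQ c k j - X (Gen.q j) ∈ Ideal.span (rels MU p t c inv kk) := by
  induction k generalizing j with
  | zero => simpa [TelQ] using (Ideal.span (rels MU p t c inv kk)).zero_mem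
  | succ k ih =>
      have hr : (X (Gen.q j) - C (c j) - X Gen.u * X (Gen.q (j+1)))
          ∈ rels MU p t c inv kk := Or.inr (Or.inr (Or.inl ⟨j, rfl⟩))
      have h1 : TelQ c (k+1) j - X (Gen.q j)
          = X Gen.u * (TelQ c k (j+1) - X (Gen.q (j+1)))
            - (X (Gen.q j) - C (c j) - X Gen.u * X (Gen.q (j+1))) := by
        rw [TelQ]; ring
      rw [h1]
      exact sub_mem (Ideal.mul_mem_left _ _ (ih _)) (Ideal.subset_span hr)

lemma teld_sub_mem (i l : ℕ) (hi1 : 1 ≤ i) (hi2 : i ≤ p - 1) (k j : ℕ) :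
    TelD t i l k j - X (Gen.d i l j) ∈ Ideal.span (rels MU p t c inv kk) := by
  induction k generalizing j with
  | zero => simpa [TelD] using (Ideal.span (rels MU p t c inv kk)).zero_mem
  | succ k ih =>
      have hr : (X (Gen.d i l j) - C (t i l j) - X Gen.u * X (Gen.d i l (j+1)))
          ∈ rels MU p t c inv kk := Or.inl ⟨i, l, j, hi1, hi2, rfl⟩
      have h1 : TelD t i l (k+1) j - X (Gen.d i l j)
          = X Gen.u * (TelD t i l k (j+1) - X (Gen.d i l (j+1)))
            - (X (Gen.d i l j) - C (t i l j) - X Gen.u * X (Gen.d i l (j+1))) := by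
        rw [TelD]; ring
      rw [h1]
      exact sub_mem (Ideal.mul_mem_left _ _ (ih _)) (Ideal.subset_span hr)

/-- full ideal: relations together with `q₁`. -/
noncomputable def Ifull : Ideal (MvPolynomial Gen MU) :=
  Ideal.span (rels MU p t c inv kk ∪ {X (Gen.q 1)})

lemma rels_sub_Ifull : Ideal.span (rels MU p t c inv kk) ≤ Ifull p t c inv kk :=
  Ideal.span_mono Set.subset_union_left

lemma mem_Ifull_of_rel {r : MvPolynomial Gen MU} (hr : r ∈ rels MU p t c inv kk) :
    r ∈ Ifull p t c inv kk := Ideal.subset_span (Or.inl hr)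

lemma Xq1_mem_Ifull : X (Gen.q 1) ∈ Ifull p t c inv kk :=
  Ideal.subset_span (Or.inr rfl)

lemma hp_le_aux (hp : 2 ≤ p) : 1 ≤ p - 1 := by omega

lemma subm_sub_mem (hp : 2 ≤ p) (ht1 : ∀ j, t 1 0 j = 0) (g : Gen) :
    subm p t c m g - X g ∈ Ifull p t c inv kk := by
  cases g with
  | u => simpa [subm] using (Ifull p t c inv kk).zero_mem
  | eta i =>
      by_cases hi : i = 1
      · subst hi
        have hr : (X (Gen.eta 1) - 1 : MvPolynomial Gen MU) ∈ rels MU p t c inv kk := by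
          right; right; right; right; left; rfl
        have h1 : subm p t c m (Gen.eta 1) - X (Gen.eta 1)
            = -(X (Gen.eta 1) - 1) := by simp [subm]
        rw [h1]; exact neg_mem (mem_Ifull_of_rel p t c inv kk hr)
      · simpa [subm, hi] using (Ifull p t c inv kk).zero_mem
  | q j =>
      by_cases hj : j ≤ m
      · have h1 : subm p t c m (Gen.q j) = TelQ c (m + 1 - j) j := by simp [subm, hj]
        rw [h1]
        exact rels_sub_Ifull p t c inv kk (telq_sub_mem p t c inv kk _ j)
      · simpa [subm, hj] using (Ifull p t c inv kk).zero_mem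
  | d i l j =>
      by_cases hc : i = 1 ∧ l = 0
      · obtain ⟨rfl, rfl⟩ := hc
        have hr : (X (Gen.d 1 0 j) : MvPolynomial Gen MU) ∈ rels MU p t c inv kk := by
          right; left; exact ⟨j, rfl⟩
        have h1 : subm p t c m (Gen.d 1 0 j) - X (Gen.d 1 0 j) = -(X (Gen.d 1 0 j)) := by
          simp [subm]
        rw [h1]; exact neg_mem (mem_Ifull_of_rel p t c inv kk hr)
      · by_cases hcond : 1 ≤ i ∧ i ≤ p - 1 ∧ j ≤ m
        · have h1 : subm p t c m (Gen.d i l j) = TelD t i l (m - j) j := by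
            simp [subm, hc, hcond]
          rw [h1]
          exact rels_sub_Ifull p t c inv kk
            (teld_sub_mem p t c inv kk i l hcond.1 hcond.2.1 _ j)
        · have h1 : subm p t c m (Gen.d i l j) = X (Gen.d i l j) := by
            simp [subm, hc, hcond]
          simpa [h1] using (Ifull p t c inv kk).zero_mem

end params

end Stmt7

namespace Stmt7
section params
variable {MU : Type} [CommRing MU]
variable (p : ℕ) (t : ℕ → ℕ → ℕ → MU) (c : ℕ → MU) (inv kk : ℕ → ℕ) (m : ℕ)

@[simp] lemma TelQ_zero (j : ℕ) : TelQ c 0 j = X (Gen.q j) := rfl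
@[simp] lemma TelQ_succ (k j : ℕ) :
    TelQ c (k+1) j = C (c j) + X Gen.u * TelQ c k (j+1) := rfl
@[simp] lemma TelD_zero (i l j : ℕ) : TelD t i l 0 j = X (Gen.d i l j) := rfl
@[simp] lemma TelD_succ (i l k j : ℕ) :
    TelD t i l (k+1) j = C (t i l j) + X Gen.u * TelD t i l k (j+1) := rfl

lemma subm_q_view {j : ℕ} (hj : j ≤ m) :
    subm p t c m (Gen.q j) = TelQ c (m + 1 - j) j := by
  simp only [subm, if_pos hj]

lemma subm_d_view {i l j : ℕ} (hc : ¬ (i = 1 ∧ l = 0)) (hcond : 1 ≤ i ∧ i ≤ p - 1 ∧ j ≤ m) :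
    subm p t c m (Gen.d i l j) = TelD t i l (m - j) j := by
  simp only [subm, if_neg hc, if_pos hcond]

lemma subm_q_eq {j : ℕ} (hj : j ≤ m) :
    subm p t c m (Gen.q j) = C (c j) + X Gen.u * subm p t c m (Gen.q (j+1)) := by
  have hnext : subm p t c m (Gen.q (j+1)) = TelQ c (m - j) (j+1) := by
    by_cases h : j + 1 ≤ m
    · rw [subm_q_view p t c m h]
      congr 1
      omega
    · have hjm : m - j = 0 := by omega
      have h2 : ¬ (j + 1 ≤ m) := h
      simp only [subm, if_neg h2, hjm, TelQ_zero]
  rw [subm_q_view p t c m hj, hnext, show m + 1 - j = (m - j) + 1 by omega, TelQ_succ]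

lemma subm_d_eq {i l j : ℕ} (hc : ¬ (i = 1 ∧ l = 0)) (hi1 : 1 ≤ i) (hi2 : i ≤ p - 1)
    (hj : j < m) :
    subm p t c m (Gen.d i l j) = C (t i l j) + X Gen.u * subm p t c m (Gen.d i l (j+1)) := by
  rw [subm_d_view p t c m hc ⟨hi1, hi2, le_of_lt hj⟩,
    subm_d_view p t c m hc ⟨hi1, hi2, hj⟩,
    show m - j = (m - (j+1)) + 1 by omega, TelD_succ]

lemma subm_d10 (j : ℕ) : subm p t c m (Gen.d 1 0 j) = 0 := by simp [subm]

lemma subm_u : subm p t c m Gen.u = X Gen.u := rfl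

lemma subm_eta {i : ℕ} (hi : i ≠ 1) : subm p t c m (Gen.eta i) = X (Gen.eta i) := by
  simp [subm, hi]

lemma subm_eta1 : subm p t c m (Gen.eta 1) = 1 := by simp [subm]

/-- the element `xᵢ = u·D_i + i⁻¹`. -/
noncomputable def xim (i : ℕ) : MvPolynomial Gen MU :=
  X Gen.u * TelD t i 0 m 0 + C ((inv i : MU))

/-- the reduced η-relation. -/
noncomputable def Em (i : ℕ) : MvPolynomial Gen MU :=
  X (Gen.eta i) * xim t inv m i - 1 - C ((kk i : MU)) * TelQ c m 1

/-- the reduced relation ideal at level `m`. -/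
noncomputable def Jm : Ideal (MvPolynomial Gen MU) :=
  Ideal.span ({TelQ c m 1} ∪ (fun i => Em t c inv kk m i) '' ↑(Finset.Icc 2 (p-1)))

lemma Tm_mem_Jm : TelQ c m 1 ∈ Jm p t c inv kk m :=
  Ideal.subset_span (Or.inl rfl)

lemma Em_mem_Jm {i : ℕ} (hi1 : 2 ≤ i) (hi2 : i ≤ p - 1) :
    Em t c inv kk m i ∈ Jm p t c inv kk m :=
  Ideal.subset_span (Or.inr ⟨i, by simpa using ⟨hi1, hi2⟩, rfl⟩)

end params
end Stmt7

namespace Stmt7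
section params
variable {MU : Type} [CommRing MU]
variable (p : ℕ) (t : ℕ → ℕ → ℕ → MU) (c : ℕ → MU) (inv kk : ℕ → ℕ) (m : ℕ)

lemma inv_one_eq (hp : 2 ≤ p)
    (hinv : ∀ i, 1 ≤ i → i ≤ p - 1 →
      1 ≤ inv i ∧ inv i ≤ p - 1 ∧ i * inv i = 1 + kk i * p) :
    inv 1 = 1 ∧ kk 1 = 0 := by
  obtain ⟨h1, h2, h3⟩ := hinv 1 le_rfl (by omega)
  rw [one_mul] at h3
  have hk : kk 1 = 0 := by
    rcases Nat.eq_zero_or_pos (kk 1) with h | h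
    · exact h
    · exfalso
      have hle : p ≤ kk 1 * p := Nat.le_mul_of_pos_left p h
      omega
  rw [hk, Nat.zero_mul, Nat.add_zero] at h3
  exact ⟨by omega, hk⟩

lemma rel_image (hp : 2 ≤ p) (hc0 : c 0 = 0) (ht1 : ∀ j, t 1 0 j = 0)
    (hinv : ∀ i, 1 ≤ i → i ≤ p - 1 →
      1 ≤ inv i ∧ inv i ≤ p - 1 ∧ i * inv i = 1 + kk i * p)
    {r : MvPolynomial Gen MU} (hr : r ∈ rels MU p t c inv kk ∪ {X (Gen.q 1)}) :
    ∃ N, ∀ m, N ≤ m → aeval (subm p t c m) r ∈ Jm p t c inv kk m := by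
  rcases hr with hr | hr
  · rcases hr with ⟨i, l, j, hi1, hi2, rfl⟩ | ⟨j, rfl⟩ | ⟨j, rfl⟩ | rfl | rfl |
      ⟨i, hi1, hi2, rfl⟩ | ⟨i, hi1, hi2, rfl⟩
    · -- d-chain relation
      refine ⟨j + 1, fun m hm => ?_⟩
      by_cases hc : i = 1 ∧ l = 0
      · obtain ⟨rfl, rfl⟩ := hc
        have : aeval (subm p t c m) (X (Gen.d 1 0 j) - C (t 1 0 j)
            - X Gen.u * X (Gen.d 1 0 (j+1))) = 0 := by
          simp only [map_sub, map_mul, aeval_X, aeval_C, subm_d10, subm_u,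
            MvPolynomial.algebraMap_eq, ht1 j, map_zero]
          ring
        rw [this]; exact (Jm p t c inv kk m).zero_mem
      · have : aeval (subm p t c m) (X (Gen.d i l j) - C (t i l j)
            - X Gen.u * X (Gen.d i l (j+1))) = 0 := by
          simp only [map_sub, map_mul, aeval_X, aeval_C, subm_u,
            MvPolynomial.algebraMap_eq]
          rw [subm_d_eq p t c m hc hi1 hi2 (by omega : j < m)]
          ring
        rw [this]; exact (Jm p t c inv kk m).zero_mem
    · -- d 1 0 j = 0
      refine ⟨0, fun m _ => ?_⟩
      have : aeval (subm p t c m) ((X (Gen.d 1 0 j) : MvPolynomial Gen MU)) = 0 := by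
        rw [aeval_X, subm_d10]
      rw [this]; exact (Jm p t c inv kk m).zero_mem
    · -- q-chain
      refine ⟨j, fun m hm => ?_⟩
      have : aeval (subm p t c m) (X (Gen.q j) - C (c j)
          - X Gen.u * X (Gen.q (j+1))) = 0 := by
        simp only [map_sub, map_mul, aeval_X, aeval_C, subm_u,
          MvPolynomial.algebraMap_eq]
        rw [subm_q_eq p t c m hm]
        ring
      rw [this]; exact (Jm p t c inv kk m).zero_mem
    · -- q 0 = 0
      refine ⟨0, fun m _ => ?_⟩
      have : aeval (subm p t c m) ((X (Gen.q 0) : MvPolynomial Gen MU))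
          = X Gen.u * TelQ c m 1 := by
        rw [aeval_X, subm_q_view p t c m (Nat.zero_le m)]
        simp [hc0]
      rw [this]
      exact Ideal.mul_mem_left _ _ (Tm_mem_Jm p t c inv kk m)
    · -- eta 1 = 1
      refine ⟨0, fun m _ => ?_⟩
      have : aeval (subm p t c m) ((X (Gen.eta 1) : MvPolynomial Gen MU) - 1) = 0 := by
        rw [map_sub, aeval_X, map_one, subm_eta1]
        ring
      rw [this]; exact (Jm p t c inv kk m).zero_mem
    · -- eta mult relation
      refine ⟨1, fun m hm => ?_⟩
      by_cases hi : i = 1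
      · subst hi
        obtain ⟨hinv1, hkk1⟩ := inv_one_eq p inv kk hp hinv
        have : aeval (subm p t c m) (X (Gen.eta 1) * (X Gen.u * X (Gen.d 1 0 0)
            + C ((inv 1 : MU))) - 1 - C ((kk 1 : MU)) * X (Gen.q 1)) = 0 := by
          simp only [map_sub, map_mul, map_add, aeval_X, aeval_C, subm_d10,
            subm_u, subm_eta1, MvPolynomial.algebraMap_eq, hinv1, hkk1,
            Nat.cast_one, Nat.cast_zero, map_one, map_zero, map_C]
          ring
        rw [this]; exact (Jm p t c inv kk m).zero_mem
      · have hi2' : 2 ≤ i := by omega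
        have : aeval (subm p t c m) (X (Gen.eta i) * (X Gen.u * X (Gen.d i 0 0)
            + C ((inv i : MU))) - 1 - C ((kk i : MU)) * X (Gen.q 1))
            = Em t c inv kk m i := by
          simp only [map_sub, map_mul, map_add, aeval_X, aeval_C, map_one,
            subm_u, MvPolynomial.algebraMap_eq]
          rw [subm_d_view p t c m (by simp [hi]) ⟨hi1, hi2, Nat.zero_le m⟩,
            subm_q_view p t c m hm, subm_eta p t c m hi]
          have h2 : m - 0 = m := by omega
          have h3 : m + 1 - 1 = m := by omega
          rw [h2, h3]
          rfl
        rw [this]; exact Em_mem_Jm p t c inv kk m hi2' hi2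
    · -- eta q1 relation
      refine ⟨1, fun m hm => ?_⟩
      have hq1 : aeval (subm p t c m) ((X (Gen.q 1) : MvPolynomial Gen MU)) = TelQ c m 1 := by
        rw [aeval_X, subm_q_view p t c m hm, show m + 1 - 1 = m by omega]
      by_cases hi : i = 1
      · subst hi
        have : aeval (subm p t c m) (X (Gen.eta 1) * X (Gen.q 1)
            - C ((1 : ℕ) : MU) * X (Gen.q 1)) = 0 := by
          rw [map_sub, map_mul, map_mul, hq1, aeval_X, aeval_C, subm_eta1]
          simp
        rw [this]; exact (Jm p t c inv kk m).zero_mem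
      · have : aeval (subm p t c m) (X (Gen.eta i) * X (Gen.q 1)
            - C ((i : ℕ) : MU) * X (Gen.q 1))
            = (X (Gen.eta i) - C ((i : ℕ) : MU)) * TelQ c m 1 := by
          rw [map_sub, map_mul, map_mul, hq1, aeval_X, aeval_C,
            subm_eta p t c m hi]
          rw [MvPolynomial.algebraMap_eq]
          ring
        rw [this]
        exact Ideal.mul_mem_left _ _ (Tm_mem_Jm p t c inv kk m)
  · -- r = X q 1
    rcases hr with rfl
    refine ⟨1, fun m hm => ?_⟩
    have : aeval (subm p t c m) ((X (Gen.q 1) : MvPolynomial Gen MU)) = TelQ c m 1 := by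
      rw [aeval_X, subm_q_view p t c m hm, show m + 1 - 1 = m by omega]
    rw [this]; exact Tm_mem_Jm p t c inv kk m

end params
end Stmt7

namespace Stmt7
section crux
variable {MU : Type} [CommRing MU]
variable (p : ℕ) (t : ℕ → ℕ → ℕ → MU) (c : ℕ → MU) (inv kk : ℕ → ℕ) (m : ℕ)

/-- substitution killing `u`. -/
noncomputable def killu : Gen → MvPolynomial Gen MU
  | Gen.u => 0
  | g => X g

lemma killu_u : killu (MU := MU) Gen.u = 0 := rfl

lemma killu_sub_mem (g : Gen) :
    killu g - X g ∈ Ideal.span {(X Gen.u : MvPolynomial Gen MU)} := by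
  cases g with
  | u =>
      rw [killu_u, zero_sub]
      exact neg_mem (Ideal.subset_span rfl)
  | d i l j => simpa [killu] using (Ideal.span {(X Gen.u : MvPolynomial Gen MU)}).zero_mem
  | eta i => simpa [killu] using (Ideal.span {(X Gen.u : MvPolynomial Gen MU)}).zero_mem
  | q j => simpa [killu] using (Ideal.span {(X Gen.u : MvPolynomial Gen MU)}).zero_mem

lemma aeval_killu_TelQ (k j : ℕ) :
    aeval (killu (MU := MU)) (TelQ c (k+1) j) = C (c j) := by
  rw [TelQ_succ, map_add, map_mul, aeval_X, killu_u, zero_mul, add_zero, aeval_C,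
    MvPolynomial.algebraMap_eq]

lemma u_cancel_T (hm : 1 ≤ m) (hc1 : c 1 = (p : MU))
    (hpnzd : ∀ y : MU, (p : MU) * y = 0 → y = 0)
    (g : MvPolynomial Gen MU) (hg : X Gen.u * g ∈ Ideal.span {TelQ c m 1}) :
    g ∈ Ideal.span {TelQ c m 1} := by
  obtain ⟨h, hh⟩ := Ideal.mem_span_singleton.mp hg
  obtain ⟨k, rfl⟩ : ∃ k, m = k + 1 := ⟨m - 1, by omega⟩
  have hev : (0 : MvPolynomial Gen MU) = C ((p : MU)) * aeval (killu (MU := MU)) h := by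
    have h0 := congrArg (aeval (killu (MU := MU))) hh
    rw [map_mul, map_mul, aeval_X, killu_u, zero_mul, aeval_killu_TelQ, hc1] at h0
    exact h0
  have hevh : aeval (killu (MU := MU)) h = 0 := by
    ext n
    have h1 := congrArg (fun w => MvPolynomial.coeff n w) hev
    simp only [MvPolynomial.coeff_zero, MvPolynomial.coeff_C_mul] at h1
    simpa using hpnzd _ h1.symm
  have hmem : h ∈ Ideal.span {(X Gen.u : MvPolynomial Gen MU)} := by
    have h2 := aeval_sub_mem (Ideal.span {(X Gen.u : MvPolynomial Gen MU)})
      (killu (MU := MU)) killu_sub_mem h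
    rw [hevh, zero_sub] at h2
    simpa using neg_mem h2
  obtain ⟨h₂, rfl⟩ := Ideal.mem_span_singleton.mp hmem
  have h3 : X Gen.u * (g - TelQ c (k+1) 1 * h₂) = 0 := by
    rw [mul_sub, hh]; ring
  have h4 := X_mul_cancel Gen.u _ h3
  rw [sub_eq_zero.mp h4]
  exact Ideal.mem_span_singleton.mpr ⟨h₂, rfl⟩

end crux
end Stmt7

namespace Stmt7
section loc
variable {MU : Type} [CommRing MU]
variable (p : ℕ) (t : ℕ → ℕ → ℕ → MU) (c : ℕ → MU) (inv kk : ℕ → ℕ) (m : ℕ)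

/-- the product of all the `xᵢ`. -/
noncomputable def xprod : MvPolynomial Gen MU :=
  ∏ i ∈ Finset.Icc 2 (p-1), xim t inv m i

/-- base quotient ring `P/(T)`. -/
abbrev QT (c : ℕ → MU) (m : ℕ) : Type :=
  MvPolynomial Gen MU ⧸ Ideal.span {TelQ c m 1}

/-- quotient projection. -/
noncomputable def mkT : MvPolynomial Gen MU →+* QT c m :=
  Ideal.Quotient.mk _

/-- localization of `P/(T)` away from `x̄`. -/
abbrev LT : Type := Localization.Away (mkT c m (xprod p t inv m))

/-- the canonical map `P → LT`. -/
noncomputable def canP : MvPolynomial Gen MU →+* LT p t c inv m :=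
  (algebraMap (QT c m) (LT p t c inv m)).comp (mkT c m)

/-- values of the detecting homomorphism on generators. -/
noncomputable def sb : Gen → LT p t c inv m
  | Gen.eta i =>
      if 2 ≤ i ∧ i ≤ p - 1 then Ring.inverse (canP p t c inv m (xim t inv m i))
      else canP p t c inv m (X (Gen.eta i))
  | g => canP p t c inv m (X g)

/-- the detecting ring homomorphism `β : P → LT`. -/
noncomputable def bet : MvPolynomial Gen MU →+* LT p t c inv m :=
  eval₂Hom ((canP p t c inv m).comp (C : MU →+* MvPolynomial Gen MU)) (sb p t c inv m)

lemma bet_C (a : MU) : bet p t c inv m (C a) = canP p t c inv m (C a) := by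
  rw [bet, eval₂Hom_C]; rfl

lemma bet_one : bet p t c inv m 1 = 1 := map_one _

lemma sb_u : sb p t c inv m Gen.u = canP p t c inv m (X Gen.u) := rfl
lemma sb_q (j : ℕ) : sb p t c inv m (Gen.q j) = canP p t c inv m (X (Gen.q j)) := rfl
lemma sb_d (i l j : ℕ) :
    sb p t c inv m (Gen.d i l j) = canP p t c inv m (X (Gen.d i l j)) := rfl
lemma sb_eta_in {i : ℕ} (hi : 2 ≤ i ∧ i ≤ p - 1) :
    sb p t c inv m (Gen.eta i) = Ring.inverse (canP p t c inv m (xim t inv m i)) := by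
  show (if 2 ≤ i ∧ i ≤ p - 1 then _ else _) = _
  rw [if_pos hi]
lemma sb_eta_out {i : ℕ} (hi : ¬ (2 ≤ i ∧ i ≤ p - 1)) :
    sb p t c inv m (Gen.eta i) = canP p t c inv m (X (Gen.eta i)) := by
  show (if 2 ≤ i ∧ i ≤ p - 1 then _ else _) = _
  rw [if_neg hi]

lemma xprod_def : xprod p t inv m = ∏ i ∈ Finset.Icc 2 (p-1), xim t inv m i := rfl

lemma Em_def (i : ℕ) : Em t c inv kk m i
    = X (Gen.eta i) * xim t inv m i - 1 - C ((kk i : MU)) * TelQ c m 1 := rfl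

lemma xim_def (i : ℕ) : xim t inv m i
    = X Gen.u * TelD t i 0 m 0 + C ((inv i : MU)) := rfl

lemma bet_Xu : bet p t c inv m (X Gen.u) = canP p t c inv m (X Gen.u) := by
  rw [bet, eval₂Hom_X', sb_u]

lemma bet_TelQ (k j : ℕ) :
    bet p t c inv m (TelQ c k j) = canP p t c inv m (TelQ c k j) := by
  induction k generalizing j with
  | zero => rw [TelQ_zero, bet, eval₂Hom_X', sb_q]
  | succ k ih =>
      rw [TelQ_succ, map_add, map_mul, map_add, map_mul, bet_C, bet_Xu, ih]

lemma bet_TelD (i l k j : ℕ) :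
    bet p t c inv m (TelD t i l k j) = canP p t c inv m (TelD t i l k j) := by
  induction k generalizing j with
  | zero => rw [TelD_zero, bet, eval₂Hom_X', sb_d]
  | succ k ih =>
      rw [TelD_succ, map_add, map_mul, map_add, map_mul, bet_C, bet_Xu, ih]

lemma bet_xim (i : ℕ) :
    bet p t c inv m (xim t inv m i) = canP p t c inv m (xim t inv m i) := by
  rw [xim_def, map_add, map_mul, map_add, map_mul, bet_C, bet_Xu, bet_TelD]

lemma bet_prod_fin (s : Finset ℕ) :
    bet p t c inv m (∏ i ∈ s, xim t inv m i)
      = canP p t c inv m (∏ i ∈ s, xim t inv m i) := by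
  rw [map_prod, map_prod]
  exact Finset.prod_congr rfl fun i _ => bet_xim p t c inv m i

lemma bet_xprod :
    bet p t c inv m (xprod p t inv m) = canP p t c inv m (xprod p t inv m) :=
  bet_prod_fin p t c inv m _

lemma canP_T_zero : canP p t c inv m (TelQ c m 1) = 0 := by
  rw [canP, RingHom.comp_apply,
    show mkT c m (TelQ c m 1) = 0 from
      Ideal.Quotient.eq_zero_iff_mem.mpr (Ideal.subset_span rfl), map_zero]

lemma isUnit_canP_xprod : IsUnit (canP p t c inv m (xprod p t inv m)) := by
  rw [canP, RingHom.comp_apply]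
  exact IsLocalization.map_units (LT p t c inv m)
    ⟨mkT c m (xprod p t inv m), Submonoid.mem_powers _⟩

lemma isUnit_canP_xim {i : ℕ} (hi : i ∈ Finset.Icc 2 (p-1)) :
    IsUnit (canP p t c inv m (xim t inv m i)) := by
  have h1 : canP p t c inv m (xim t inv m i)
      * canP p t c inv m (∏ j ∈ (Finset.Icc 2 (p-1)).erase i, xim t inv m j)
      = canP p t c inv m (xprod p t inv m) := by
    rw [← map_mul]
    congr 1
    exact Finset.mul_prod_erase _ _ hi
  exact isUnit_of_mul_isUnit_left (h1 ▸ isUnit_canP_xprod p t c inv m)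

lemma bet_J {w : MvPolynomial Gen MU} (hw : w ∈ Jm p t c inv kk m) :
    bet p t c inv m w = 0 := by
  have hker : Jm p t c inv kk m ≤ RingHom.ker (bet p t c inv m) := by
    rw [Jm, Ideal.span_le]
    rintro w (hw | ⟨i, hi, rfl⟩)
    · rcases hw with rfl
      rw [SetLike.mem_coe, RingHom.mem_ker, bet_TelQ, canP_T_zero]
    · have hi' : 2 ≤ i ∧ i ≤ p - 1 := by
        simpa [Finset.mem_Icc] using hi
      rw [SetLike.mem_coe, RingHom.mem_ker]
      show bet p t c inv m (Em t c inv kk m i) = 0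
      rw [Em_def, map_sub, map_sub, map_mul, map_mul]
      rw [show bet p t c inv m (X (Gen.eta i)) = sb p t c inv m (Gen.eta i) from
        eval₂Hom_X' _ _ _]
      rw [sb_eta_in p t c inv m hi', bet_xim, bet_TelQ, canP_T_zero, bet_C, bet_one,
        Ring.inverse_mul_cancel _ (isUnit_canP_xim p t c inv m (Finset.mem_Icc.mpr hi'))]
      ring
  exact RingHom.mem_ker.mp (hker hw)

lemma u_nzd_Q (hm : 1 ≤ m) (hc1 : c 1 = (p : MU))
    (hpnzd : ∀ y : MU, (p : MU) * y = 0 → y = 0)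
    (a : QT c m) (ha : mkT c m (X Gen.u) * a = 0) : a = 0 := by
  obtain ⟨g, rfl⟩ := Ideal.Quotient.mk_surjective (I := Ideal.span {TelQ c m 1}) a
  have h1 : mkT c m (X Gen.u * g) = 0 := by
    rw [map_mul]; exact ha
  have h2 : X Gen.u * g ∈ Ideal.span {TelQ c m 1} :=
    Ideal.Quotient.eq_zero_iff_mem.mp h1
  exact Ideal.Quotient.eq_zero_iff_mem.mpr (u_cancel_T p c m hm hc1 hpnzd g h2)

lemma u_nzd_L (hm : 1 ≤ m) (hc1 : c 1 = (p : MU))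
    (hpnzd : ∀ y : MU, (p : MU) * y = 0 → y = 0)
    (z : LT p t c inv m) (hz : canP p t c inv m (X Gen.u) * z = 0) : z = 0 := by
  set M := Submonoid.powers (mkT c m (xprod p t inv m)) with hM
  obtain ⟨⟨a, s⟩, hs⟩ := IsLocalization.surj M z
  have h1 : algebraMap (QT c m) (LT p t c inv m) (mkT c m (X Gen.u) * a) = 0 := by
    rw [map_mul, ← hs, ← mul_assoc]
    rw [show algebraMap (QT c m) (LT p t c inv m) (mkT c m (X Gen.u)) * z
      = canP p t c inv m (X Gen.u) * z from rfl, hz]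
    exact zero_mul (M₀ := LT p t c inv m) _
  obtain ⟨⟨mm, hmm⟩, hmel⟩ := (IsLocalization.map_eq_zero_iff M (LT p t c inv m) _).mp h1
  obtain ⟨n, rfl⟩ := hmm
  have h2 : mkT c m (X Gen.u) * (mkT c m (xprod p t inv m) ^ n * a) = 0 := by
    rw [← hmel]; ring
  have h3 := u_nzd_Q p c m hm hc1 hpnzd _ h2
  have h4 : algebraMap (QT c m) (LT p t c inv m) a = 0 := by
    have h5 : algebraMap (QT c m) (LT p t c inv m) (mkT c m (xprod p t inv m)) ^ n
        * algebraMap (QT c m) (LT p t c inv m) a = 0 := by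
      rw [← map_pow, ← map_mul, h3, map_zero]
    have h6 : IsUnit (algebraMap (QT c m) (LT p t c inv m)
        (mkT c m (xprod p t inv m)) ^ n) :=
      (IsLocalization.map_units (LT p t c inv m)
        ⟨mkT c m (xprod p t inv m), Submonoid.mem_powers _⟩).pow n
    exact (IsUnit.mul_right_eq_zero (M₀ := LT p t c inv m) h6).mp h5
  have h7 : IsUnit (algebraMap (QT c m) (LT p t c inv m) (s : QT c m)) :=
    IsLocalization.map_units (LT p t c inv m) s
  rw [h4] at hs
  exact (IsUnit.mul_left_eq_zero (M₀ := LT p t c inv m) h7).mp hs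

end loc
end Stmt7

namespace Stmt7
section crux2
variable {MU : Type} [CommRing MU]
variable (p : ℕ) (t : ℕ → ℕ → ℕ → MU) (c : ℕ → MU) (inv kk : ℕ → ℕ) (m : ℕ)

lemma red (G : MvPolynomial Gen MU) :
    ∃ (N : ℕ) (G' : MvPolynomial Gen MU),
      xprod p t inv m ^ N * G - G' ∈ Jm p t c inv kk m ∧
      bet p t c inv m G' = canP p t c inv m G' := by
  induction G using MvPolynomial.induction_on with
  | C a =>
      refine ⟨0, C a, ?_, bet_C p t c inv m a⟩
      simpa using (Jm p t c inv kk m).zero_mem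
  | add f g hf hg =>
      obtain ⟨N1, f', h1, h2⟩ := hf
      obtain ⟨N2, g', h3, h4⟩ := hg
      refine ⟨N1 + N2, xprod p t inv m ^ N2 * f' + xprod p t inv m ^ N1 * g', ?_, ?_⟩
      · have hid : xprod p t inv m ^ (N1 + N2) * (f + g)
            - (xprod p t inv m ^ N2 * f' + xprod p t inv m ^ N1 * g')
            = xprod p t inv m ^ N2 * (xprod p t inv m ^ N1 * f - f')
              + xprod p t inv m ^ N1 * (xprod p t inv m ^ N2 * g - g') := by
          rw [pow_add]; ring
        rw [hid]
        exact add_mem (Ideal.mul_mem_left _ _ h1) (Ideal.mul_mem_left _ _ h3)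
      · rw [map_add, map_mul, map_mul, map_pow, map_pow, bet_xprod, h2, h4,
          map_add, map_mul, map_mul, map_pow, map_pow]
  | mul_X f s hf =>
      obtain ⟨N, f', h1, h2⟩ := hf
      have hgen : ∀ s : Gen, sb p t c inv m s = canP p t c inv m (X s) →
          ∃ (N' : ℕ) (G' : MvPolynomial Gen MU),
            xprod p t inv m ^ N' * (f * X s) - G' ∈ Jm p t c inv kk m ∧
            bet p t c inv m G' = canP p t c inv m G' := by
        intro s hs
        refine ⟨N, f' * X s, ?_, ?_⟩
        · have hid : xprod p t inv m ^ N * (f * X s) - f' * X s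
              = (xprod p t inv m ^ N * f - f') * X s := by ring
          rw [hid]
          exact Ideal.mul_mem_right _ _ h1
        · rw [map_mul, map_mul, h2,
            show bet p t c inv m (X s) = sb p t c inv m s from eval₂Hom_X' _ _ _, hs]
      cases s with
      | u => exact hgen Gen.u (sb_u p t c inv m)
      | q j => exact hgen (Gen.q j) (sb_q p t c inv m j)
      | d i l j => exact hgen (Gen.d i l j) (sb_d p t c inv m i l j)
      | eta i =>
          by_cases hi : 2 ≤ i ∧ i ≤ p - 1
          · have hiI : i ∈ Finset.Icc 2 (p-1) := Finset.mem_Icc.mpr hi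
            set Eri : MvPolynomial Gen MU :=
              ∏ j ∈ (Finset.Icc 2 (p-1)).erase i, xim t inv m j with hEri
            have hx : xprod p t inv m = xim t inv m i * Eri :=
              (Finset.mul_prod_erase _ _ hiI).symm
            refine ⟨N + 1, f' * (Eri * (1 + C ((kk i : MU)) * TelQ c m 1)), ?_, ?_⟩
            · have hid : xprod p t inv m ^ (N + 1) * (f * X (Gen.eta i))
                  - f' * (Eri * (1 + C ((kk i : MU)) * TelQ c m 1))
                  = (X (Gen.eta i) * xprod p t inv m)
                      * (xprod p t inv m ^ N * f - f')
                    + (f' * Eri) * (Em t c inv kk m i) := by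
                rw [Em_def, hx]
                ring
              rw [hid]
              exact add_mem (Ideal.mul_mem_left _ _ h1)
                (Ideal.mul_mem_left _ _ (Em_mem_Jm p t c inv kk m hi.1 hi.2))
            · have hEribet : bet p t c inv m Eri = canP p t c inv m Eri :=
                bet_prod_fin p t c inv m _
              simp only [map_mul, map_add, map_one, bet_C, bet_TelQ, h2, hEribet]
          · exact hgen (Gen.eta i) (sb_eta_out p t c inv m hi)

lemma one_sub_pow_mem (w : MvPolynomial Gen MU)
    (hw : w - 1 ∈ Jm p t c inv kk m) (n : ℕ) : w ^ n - 1 ∈ Jm p t c inv kk m := by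
  induction n with
  | zero => simpa using (Jm p t c inv kk m).zero_mem
  | succ n ih =>
      have hid : w ^ (n+1) - 1 = w ^ n * (w - 1) + (w ^ n - 1) := by ring
      rw [hid]
      exact add_mem (Ideal.mul_mem_left _ _ hw) ih

lemma xprod_eta_one_mem :
    xprod p t inv m * (∏ i ∈ Finset.Icc 2 (p-1), X (Gen.eta i)) - 1
      ∈ Jm p t c inv kk m := by
  rw [xprod_def, ← Finset.prod_mul_distrib]
  have hmain : ∀ s : Finset ℕ, ↑s ⊆ (Finset.Icc 2 (p-1) : Finset ℕ) →
      (∏ i ∈ s, (xim t inv m i * X (Gen.eta i))) - 1 ∈ Jm p t c inv kk m := by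
    intro s
    induction s using Finset.induction_on with
    | empty => intro _; simpa using (Jm p t c inv kk m).zero_mem
    | insert a s' ha ih =>
        intro hsub
        have haI : a ∈ Finset.Icc 2 (p-1) := hsub (by simp)
        have hs' : ↑s' ⊆ (Finset.Icc 2 (p-1) : Finset ℕ) :=
          fun z hz => hsub (by simp [hz])
        rw [Finset.prod_insert ha]
        have hfac : xim t inv m a * X (Gen.eta a) - 1 ∈ Jm p t c inv kk m := by
          have hid : xim t inv m a * X (Gen.eta a) - 1
              = Em t c inv kk m a + C ((kk a : MU)) * TelQ c m 1 := by
            rw [Em_def]; ring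
          rw [hid]
          have haicc := Finset.mem_Icc.mp haI
          exact add_mem (Em_mem_Jm p t c inv kk m haicc.1 haicc.2)
            (Ideal.mul_mem_left _ _ (Tm_mem_Jm p t c inv kk m))
        have hid2 : xim t inv m a * X (Gen.eta a)
              * (∏ i ∈ s', (xim t inv m i * X (Gen.eta i))) - 1
            = (xim t inv m a * X (Gen.eta a))
                * ((∏ i ∈ s', (xim t inv m i * X (Gen.eta i))) - 1)
              + (xim t inv m a * X (Gen.eta a) - 1) := by ring
        rw [hid2]
        exact add_mem (Ideal.mul_mem_left _ _ (ih hs')) hfac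
  exact hmain _ (by simp)

lemma xprod_pow_cancel (n : ℕ) (G : MvPolynomial Gen MU)
    (h : xprod p t inv m ^ n * G ∈ Jm p t c inv kk m) : G ∈ Jm p t c inv kk m := by
  set y : MvPolynomial Gen MU := ∏ i ∈ Finset.Icc 2 (p-1), X (Gen.eta i) with hy
  have h2 : (xprod p t inv m * y) ^ n - 1 ∈ Jm p t c inv kk m :=
    one_sub_pow_mem p t c inv kk m _ (xprod_eta_one_mem p t c inv kk m) n
  have hid : G = y ^ n * (xprod p t inv m ^ n * G)
      - ((xprod p t inv m * y) ^ n - 1) * G := by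
    rw [mul_pow]; ring
  rw [hid]
  exact sub_mem (Ideal.mul_mem_left _ _ h) (Ideal.mul_mem_right _ _ h2)

lemma crux (hm : 1 ≤ m) (hc1 : c 1 = (p : MU))
    (hpnzd : ∀ y : MU, (p : MU) * y = 0 → y = 0)
    (k : ℕ) (G : MvPolynomial Gen MU)
    (h : X Gen.u ^ k * G ∈ Jm p t c inv kk m) : G ∈ Jm p t c inv kk m := by
  have haux : ∀ (k : ℕ) (z : LT p t c inv m),
      canP p t c inv m (X Gen.u) ^ k * z = 0 → z = 0 := by
    intro k
    induction k with
    | zero => intro z hz; simpa using hz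
    | succ k ih =>
        intro z hz
        have h1 : canP p t c inv m (X Gen.u) ^ k
            * (canP p t c inv m (X Gen.u) * z) = 0 := by
          rw [← hz]; ring
        exact u_nzd_L p t c inv m hm hc1 hpnzd z (ih _ h1)
  have hb : bet p t c inv m G = 0 := by
    have h0 : bet p t c inv m (X Gen.u ^ k * G) = 0 := bet_J p t c inv kk m h
    rw [map_mul, map_pow, bet_Xu] at h0
    exact haux k _ h0
  obtain ⟨N, G', h1, h2⟩ := red p t c inv kk m G
  have h3 : bet p t c inv m G' = 0 := by
    have h4 := bet_J p t c inv kk m h1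
    rw [map_sub, sub_eq_zero] at h4
    rw [← h4, map_mul, hb]
    ring
  have h5 : algebraMap (QT c m) (LT p t c inv m) (mkT c m G') = 0 := by
    rw [show algebraMap (QT c m) (LT p t c inv m) (mkT c m G')
      = canP p t c inv m G' from rfl, ← h2, h3]
  obtain ⟨⟨mm, hmm⟩, hmel⟩ := (IsLocalization.map_eq_zero_iff
    (Submonoid.powers (mkT c m (xprod p t inv m))) (LT p t c inv m) _).mp h5
  obtain ⟨n, rfl⟩ := hmm
  have h6 : xprod p t inv m ^ n * G' ∈ Ideal.span {TelQ c m 1} := by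
    apply Ideal.Quotient.eq_zero_iff_mem.mp
    have : mkT c m (xprod p t inv m ^ n * G')
        = mkT c m (xprod p t inv m) ^ n * mkT c m G' := by
      rw [map_mul, map_pow]
    rw [show Ideal.Quotient.mk (Ideal.span {TelQ c m 1}) (xprod p t inv m ^ n * G')
      = mkT c m (xprod p t inv m ^ n * G') from rfl, this]
    exact hmel
  have h7 : xprod p t inv m ^ n * G' ∈ Jm p t c inv kk m := by
    have hle : Ideal.span {TelQ c m 1} ≤ Jm p t c inv kk m := by
      refine Ideal.span_le.mpr ?_
      intro w hw
      rcases hw with rfl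
      exact Tm_mem_Jm p t c inv kk m
    exact hle h6
  have h8 : xprod p t inv m ^ (n + N) * G ∈ Jm p t c inv kk m := by
    have hid : xprod p t inv m ^ (n + N) * G
        = xprod p t inv m ^ n * (xprod p t inv m ^ N * G - G')
          + xprod p t inv m ^ n * G' := by
      rw [pow_add]; ring
    rw [hid]
    exact add_mem (Ideal.mul_mem_left _ _ h1) h7
  exact xprod_pow_cancel p t c inv kk m _ _ h8

end crux2
end Stmt7

namespace Stmt7
section final
variable {MU : Type} [CommRing MU]
variable (p : ℕ) (t : ℕ → ℕ → ℕ → MU) (c : ℕ → MU) (inv kk : ℕ → ℕ)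

lemma finset_bound (hp : 2 ≤ p) (hc0 : c 0 = 0) (ht1 : ∀ j, t 1 0 j = 0)
    (hinv : ∀ i, 1 ≤ i → i ≤ p - 1 →
      1 ≤ inv i ∧ inv i ≤ p - 1 ∧ i * inv i = 1 + kk i * p)
    (s : Finset (MvPolynomial Gen MU))
    (hs : ↑s ⊆ rels MU p t c inv kk ∪ {X (Gen.q 1)}) :
    ∃ M, ∀ m, M ≤ m → ∀ r ∈ s, aeval (subm p t c m) r ∈ Jm p t c inv kk m := by
  classical
  induction s using Finset.induction_on with
  | empty => exact ⟨0, fun m _ r hr => absurd hr (by simp)⟩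
  | insert a s' ha ih =>
      have haa : (a : MvPolynomial Gen MU) ∈ rels MU p t c inv kk ∪ {X (Gen.q 1)} :=
        hs (Finset.mem_coe.mpr (Finset.mem_insert_self a s'))
      obtain ⟨N, hN⟩ := rel_image p t c inv kk hp hc0 ht1 hinv haa
      obtain ⟨M, hM⟩ := ih (fun z hz =>
        hs (Finset.mem_coe.mpr (Finset.mem_insert_of_mem (Finset.mem_coe.mp hz))))
      refine ⟨max N M, fun m hm r hr => ?_⟩
      rcases Finset.mem_insert.mp hr with rfl | hr
      · exact hN m (le_trans (le_max_left _ _) hm)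
      · exact hM m (le_trans (le_max_right _ _) hm) r hr

lemma Jm_le_Ifull (hp : 2 ≤ p) (m : ℕ) (hm : 1 ≤ m) :
    Jm p t c inv kk m ≤ Ifull p t c inv kk := by
  rw [Jm, Ideal.span_le]
  rintro w (hw | ⟨i, hi, rfl⟩)
  · rcases hw with rfl
    have h1 := rels_sub_Ifull p t c inv kk (telq_sub_mem p t c inv kk m 1)
    have h2 := Xq1_mem_Ifull p t c inv kk
    rw [SetLike.mem_coe]
    have hid : TelQ c m 1 = (TelQ c m 1 - X (Gen.q 1)) + X (Gen.q 1) := by ring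
    rw [hid]
    exact add_mem h1 h2
  · rw [SetLike.mem_coe]
    show Em t c inv kk m i ∈ Ifull p t c inv kk
    have hi' := Finset.mem_Icc.mp (by simpa using hi)
    have hi1 : 1 ≤ i := by omega
    have hr : (X (Gen.eta i) * (X Gen.u * X (Gen.d i 0 0) + C ((inv i : MU)))
        - 1 - C ((kk i : MU)) * X (Gen.q 1)) ∈ rels MU p t c inv kk := by
      right; right; right; right; right; left
      exact ⟨i, hi1, hi'.2, rfl⟩
    have h1 := rels_sub_Ifull p t c inv kk
      (teld_sub_mem p t c inv kk i 0 hi1 hi'.2 m 0)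
    have h2 := rels_sub_Ifull p t c inv kk (telq_sub_mem p t c inv kk m 1)
    have hid : Em t c inv kk m i
        = (X (Gen.eta i) * (X Gen.u * X (Gen.d i 0 0) + C ((inv i : MU)))
            - 1 - C ((kk i : MU)) * X (Gen.q 1))
          + (X (Gen.eta i) * X Gen.u * (TelD t i 0 m 0 - X (Gen.d i 0 0))
            - C ((kk i : MU)) * (TelQ c m 1 - X (Gen.q 1))) := by
      rw [Em_def, xim_def]; ring
    rw [hid]
    exact add_mem (mem_Ifull_of_rel p t c inv kk hr)
      (sub_mem (Ideal.mul_mem_left _ _ h1) (Ideal.mul_mem_left _ _ h2))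

lemma key (hp : 2 ≤ p) (hc0 : c 0 = 0) (hc1 : c 1 = (p : MU))
    (hpnzd : ∀ y : MU, (p : MU) * y = 0 → y = 0)
    (ht1 : ∀ j, t 1 0 j = 0)
    (hinv : ∀ i, 1 ≤ i → i ≤ p - 1 →
      1 ≤ inv i ∧ inv i ≤ p - 1 ∧ i * inv i = 1 + kk i * p)
    (f : MvPolynomial Gen MU) (k : ℕ)
    (h : X Gen.u ^ k * f ∈ Ifull p t c inv kk) : f ∈ Ifull p t c inv kk := by
  obtain ⟨s, hs, hmem⟩ := Submodule.mem_span_finite_of_mem_span h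
  obtain ⟨M, hM⟩ := finset_bound p t c inv kk hp hc0 ht1 hinv s hs
  set m := max M 1 with hmdef
  have hm1 : 1 ≤ m := le_max_right _ _
  have hmM : M ≤ m := le_max_left _ _
  have himg : aeval (subm p t c m) (X Gen.u ^ k * f) ∈ Jm p t c inv kk m := by
    have h1 : Ideal.map (aeval (subm p t c m)) (Ideal.span (↑s : Set (MvPolynomial Gen MU)))
        ≤ Jm p t c inv kk m := by
      rw [Ideal.map_span, Ideal.span_le]
      rintro w ⟨r, hr, rfl⟩
      exact hM m hmM r hr
    exact h1 (Ideal.mem_map_of_mem _ hmem)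
  have himg2 : X Gen.u ^ k * aeval (subm p t c m) f ∈ Jm p t c inv kk m := by
    have hcomm : aeval (subm p t c m) (X Gen.u ^ k * f)
        = X Gen.u ^ k * aeval (subm p t c m) f := by
      rw [map_mul, map_pow, aeval_X, subm_u]
    rwa [hcomm] at himg
  have hG : aeval (subm p t c m) f ∈ Jm p t c inv kk m :=
    crux p t c inv kk m hm1 hc1 hpnzd k _ himg2
  have hsub2 := aeval_sub_mem (Ifull p t c inv kk) (subm p t c m)
    (subm_sub_mem p t c inv kk m hp ht1) f
  have hid : f = aeval (subm p t c m) f - (aeval (subm p t c m) f - f) := by ring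
  rw [hid]
  exact sub_mem (Jm_le_Ifull p t c inv kk hp m hm1 hG) hsub2

end final
end Stmt7

/-- Lemma 3.4: in the presented ring `R`,
`⋃_k Ann(u^k) = Ann(u) = (q₁)`. -/
theorem stmt_7 (MU : Type) [CommRing MU] (p : ℕ) (hp : p.Prime)
    (t : ℕ → ℕ → ℕ → MU) (c : ℕ → MU) (inv kk : ℕ → ℕ)
    (hc0 : c 0 = 0) (hc1 : c 1 = (p : MU))
    (hpnzd : ∀ y : MU, (p : MU) * y = 0 → y = 0)
    (ht1 : ∀ j, t 1 0 j = 0)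
    (hinv : ∀ i, 1 ≤ i → i ≤ p - 1 →
      1 ≤ inv i ∧ inv i ≤ p - 1 ∧ i * inv i = 1 + kk i * p) :
    (∀ y : Rring MU p t c inv kk,
      (∃ k : ℕ, y * gen MU p t c inv kk Gen.u ^ k = 0) ↔
        y ∈ Ideal.span {gen MU p t c inv kk (Gen.q 1)}) ∧
    (∀ y : Rring MU p t c inv kk,
      y * gen MU p t c inv kk Gen.u = 0 ↔
        y ∈ Ideal.span {gen MU p t c inv kk (Gen.q 1)}) := by

  have hp2 : 2 ≤ p := hp.two_le
  -- `q₁ · u = 0` in `R`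
  have hq1u : gen MU p t c inv kk (Gen.q 1) * gen MU p t c inv kk Gen.u = 0 := by
    show Ideal.Quotient.mk _ (X (Gen.q 1)) * Ideal.Quotient.mk _ (X Gen.u) = 0
    rw [← map_mul, Ideal.Quotient.eq_zero_iff_mem]
    have hr0 : (X (Gen.q 0) : MvPolynomial Gen MU) ∈ rels MU p t c inv kk := by
      right; right; right; left; rfl
    have hr1 : (X (Gen.q 0) - C (c 0) - X Gen.u * X (Gen.q 1) : MvPolynomial Gen MU)
        ∈ rels MU p t c inv kk := by
      right; right; left; exact ⟨0, rfl⟩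
    have hC0 : (C (c 0) : MvPolynomial Gen MU) = 0 := by rw [hc0, map_zero]
    have hid : (X (Gen.q 1) * X Gen.u : MvPolynomial Gen MU)
        = X (Gen.q 0) - (X (Gen.q 0) - C (c 0) - X Gen.u * X (Gen.q 1)) - C (c 0) := by
      ring
    rw [hid]
    refine sub_mem (sub_mem (Ideal.subset_span hr0) (Ideal.subset_span hr1)) ?_
    rw [hC0]
    exact Ideal.zero_mem _
  have hback : ∀ y : Rring MU p t c inv kk,
      y ∈ Ideal.span {gen MU p t c inv kk (Gen.q 1)} →
        y * gen MU p t c inv kk Gen.u = 0 := by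
    intro y hy
    obtain ⟨z, rfl⟩ := Ideal.mem_span_singleton.mp hy
    rw [mul_right_comm, hq1u, zero_mul]
  have hforward : ∀ (y : Rring MU p t c inv kk) (k : ℕ),
      y * gen MU p t c inv kk Gen.u ^ k = 0 →
        y ∈ Ideal.span {gen MU p t c inv kk (Gen.q 1)} := by
    intro y k hy
    obtain ⟨f, rfl⟩ := Ideal.Quotient.mk_surjective y
    have h0 : Ideal.Quotient.mk (Ideal.span (rels MU p t c inv kk))
        (f * X Gen.u ^ k) = 0 := by
      rw [map_mul, map_pow]; exact hy
    have h1 : f * X Gen.u ^ k ∈ Ideal.span (rels MU p t c inv kk) :=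
      Ideal.Quotient.eq_zero_iff_mem.mp h0
    have h2 : X Gen.u ^ k * f ∈ Stmt7.Ifull p t c inv kk := by
      rw [mul_comm]
      exact Stmt7.rels_sub_Ifull p t c inv kk h1
    have h3 : f ∈ Stmt7.Ifull p t c inv kk :=
      Stmt7.key p t c inv kk hp2 hc0 hc1 hpnzd ht1 hinv f k h2
    have h4 := Ideal.mem_map_of_mem
      (Ideal.Quotient.mk (Ideal.span (rels MU p t c inv kk))) h3
    have h5 : Ideal.map (Ideal.Quotient.mk (Ideal.span (rels MU p t c inv kk)))
        (Stmt7.Ifull p t c inv kk)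
        ≤ Ideal.span {gen MU p t c inv kk (Gen.q 1)} := by
      rw [Stmt7.Ifull, Ideal.map_span, Ideal.span_le]
      rintro w ⟨r, hr, rfl⟩
      rcases hr with hr | hr
      · have hz : Ideal.Quotient.mk (Ideal.span (rels MU p t c inv kk)) r = 0 :=
          Ideal.Quotient.eq_zero_iff_mem.mpr (Ideal.subset_span hr)
        rw [SetLike.mem_coe, hz]
        exact Ideal.zero_mem _
      · rcases hr with rfl
        exact Ideal.subset_span rfl
    exact h5 h4
  refine ⟨fun y => ⟨fun ⟨k, hk⟩ => hforward y k hk,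
    fun hy => ⟨1, by rw [pow_one]; exact hback y hy⟩⟩,
    fun y => ⟨fun hy => hforward y 1 (by rw [pow_one]; exact hy), hback y⟩⟩
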